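/- For every positive integer k, there exists a connected graph with metric dimension at most 2k that contains K_{n,n} as a subgraph with n = 2^k - 1. -/

import Mathlib

open SimpleGraph Finset

/-- Distance from an edge (as an unordered pair) to a vertex: the minimum
of the distances from the two endpoints. -/
noncomputable def edgeVertexDist {V : Type*} (G : SimpleGraph V) (e : Sym2 V) (v : V) : ℕ :=
  Sym2.lift ⟨fun x y => min (G.dist x v) (G.dist y v), fun x y => by
    simp [min_comm]⟩ e

/-- `S` is a resolving set for the vertices of `G`. -/
def IsResolvingSet {V : Type*} (G : SimpleGraph V) (S : Set V) : Prop :=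
  ∀ u w : V, (∀ s ∈ S, G.dist u s = G.dist w s) → u = w

/-- `S` is a resolving set for the edges of `G`. -/
def IsEdgeResolvingSet {V : Type*} (G : SimpleGraph V) (S : Set V) : Prop :=
  ∀ e ∈ G.edgeSet, ∀ f ∈ G.edgeSet,
    (∀ s ∈ S, edgeVertexDist G e s = edgeVertexDist G f s) → e = f

/-- The metric dimension of `G`. -/
noncomputable def metricDim {V : Type*} (G : SimpleGraph V) : ℕ :=
  sInf {k | ∃ S : Finset V, S.card = k ∧ IsResolvingSet G (S : Set V)}

/-- The edge metric dimension of `G`. -/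
noncomputable def edgeMetricDim {V : Type*} (G : SimpleGraph V) : ℕ :=
  sInf {k | ∃ S : Finset V, S.card = k ∧ IsEdgeResolvingSet G (S : Set V)}

section Construction

variable (k : ℕ)

/-- Binary strings of length `k` other than the all-ones string. -/
abbrev MyStr := {f : Fin k → Bool // f ≠ fun _ => true}

/-- Vertex type: left side, right side, left tags, right tags. -/
abbrev MyVtx := MyStr k ⊕ MyStr k ⊕ (Fin k ⊕ Fin k)

def myRel : MyVtx k → MyVtx k → Prop
  | Sum.inl _, Sum.inr (Sum.inl _) => True
  | Sum.inl l, Sum.inr (Sum.inr (Sum.inl i)) => l.1 i = false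
  | Sum.inr (Sum.inl r), Sum.inr (Sum.inr (Sum.inr j)) => r.1 j = false
  | Sum.inr (Sum.inr _), Sum.inr (Sum.inr _) => True
  | _, _ => False

def myG : SimpleGraph (MyVtx k) := SimpleGraph.fromRel (myRel k)

lemma myStr_exists_false (l : MyStr k) : ∃ i, l.1 i = false := by
  by_contra h
  push_neg at h
  exact l.2 (funext fun i => by simpa using h i)

lemma myG_connected (hk : 1 ≤ k) : (myG k).Connected := by
  let t0 : MyVtx k := Sum.inr (Sum.inr (Sum.inl ⟨0, hk⟩))
  have tagAdj : ∀ t : Fin k ⊕ Fin k, Sum.inr (Sum.inr t) ≠ t0 →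
      (myG k).Adj (Sum.inr (Sum.inr t)) t0 := by
    intro t ht
    exact ⟨ht, Or.inl trivial⟩
  have reach : ∀ v : MyVtx k, (myG k).Reachable v t0 := by
    intro v
    have tagReach : ∀ t : Fin k ⊕ Fin k, (myG k).Reachable (Sum.inr (Sum.inr t)) t0 := by
      intro t
      by_cases h : Sum.inr (Sum.inr t) = t0
      · rw [h]
      · exact (tagAdj t h).reachable
    match v with
    | Sum.inl l =>
      obtain ⟨i, hi⟩ := myStr_exists_false k l
      have hadj : (myG k).Adj (Sum.inl l) (Sum.inr (Sum.inr (Sum.inl i))) :=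
        ⟨by simp, Or.inl hi⟩
      exact hadj.reachable.trans (tagReach (Sum.inl i))
    | Sum.inr (Sum.inl r) =>
      obtain ⟨j, hj⟩ := myStr_exists_false k r
      have hadj : (myG k).Adj (Sum.inr (Sum.inl r)) (Sum.inr (Sum.inr (Sum.inr j))) :=
        ⟨by simp, Or.inl hj⟩
      exact hadj.reachable.trans (tagReach (Sum.inr j))
    | Sum.inr (Sum.inr t) => exact tagReach t
  haveI : Nonempty (MyVtx k) := ⟨t0⟩
  exact ⟨fun a b => (reach a).trans (reach b).symm⟩

/-- Adjacency of a left vertex with a left tag. -/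
lemma adj_left_tag (l : MyStr k) (i : Fin k) :
    (myG k).Adj (Sum.inl l) (Sum.inr (Sum.inr (Sum.inl i))) ↔ l.1 i = false := by
  constructor
  · rintro ⟨-, h | h⟩
    · exact h
    · simp [myRel] at h
  · intro h; exact ⟨by simp, Or.inl h⟩

lemma adj_right_tag (r : MyStr k) (j : Fin k) :
    (myG k).Adj (Sum.inr (Sum.inl r)) (Sum.inr (Sum.inr (Sum.inr j))) ↔ r.1 j = false := by
  constructor
  · rintro ⟨-, h | h⟩
    · exact h
    · simp [myRel] at h
  · intro h; exact ⟨by simp, Or.inl h⟩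

lemma not_adj_left_rtag (l : MyStr k) (j : Fin k) :
    ¬ (myG k).Adj (Sum.inl l) (Sum.inr (Sum.inr (Sum.inr j))) := by
  rintro ⟨-, h | h⟩ <;> simp [myRel] at h

lemma not_adj_right_ltag (r : MyStr k) (i : Fin k) :
    ¬ (myG k).Adj (Sum.inr (Sum.inl r)) (Sum.inr (Sum.inr (Sum.inl i))) := by
  rintro ⟨-, h | h⟩ <;> simp [myRel] at h

end Construction

/-- For every `k ≥ 1` there is a connected graph of metric dimension at most `2k`
containing `K_{n,n}` with `n = 2^k - 1`. -/
theorem stmt_10 (k : ℕ) (hk : 1 ≤ k) :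
    ∃ (V : Type) (_ : Fintype V) (G : SimpleGraph V),
      G.Connected ∧ metricDim G ≤ 2 * k ∧
        ∃ A B : Finset V, Disjoint A B ∧ A.card = 2 ^ k - 1 ∧ B.card = 2 ^ k - 1 ∧
          ∀ a ∈ A, ∀ b ∈ B, G.Adj a b := by
  have hconn := myG_connected k hk
  refine ⟨MyVtx k, inferInstance, myG k, hconn, ?_, ?_⟩
  · -- metric dimension bound
    set S : Finset (MyVtx k) :=
      Finset.univ.image (fun t : Fin k ⊕ Fin k => Sum.inr (Sum.inr t)) with hS
    have hinj : Function.Injective (fun t : Fin k ⊕ Fin k => (Sum.inr (Sum.inr t) : MyVtx k)) :=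
      fun a b h => by simpa using h
    have hcard : S.card = 2 * k := by
      rw [hS, Finset.card_image_of_injective _ hinj, Finset.card_univ, Fintype.card_sum,
        Fintype.card_fin]
      ring
    have hres : IsResolvingSet (myG k) (S : Set (MyVtx k)) := by
      intro u w h
      have hd : ∀ t : Fin k ⊕ Fin k,
          (myG k).dist u (Sum.inr (Sum.inr t)) = (myG k).dist w (Sum.inr (Sum.inr t)) := by
        intro t
        exact h _ (by simp [hS])
      have adjiff : ∀ t : Fin k ⊕ Fin k,
          ((myG k).Adj u (Sum.inr (Sum.inr t)) ↔ (myG k).Adj w (Sum.inr (Sum.inr t))) := by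
        intro t
        rw [← SimpleGraph.dist_eq_one_iff_adj, ← SimpleGraph.dist_eq_one_iff_adj, hd t]
      -- if u is a tag
      have utag : ∀ t : Fin k ⊕ Fin k, u = Sum.inr (Sum.inr t) → u = w := by
        intro t hu
        have h0 : (myG k).dist w (Sum.inr (Sum.inr t)) = 0 := by
          rw [← hd t, hu, SimpleGraph.dist_self]
        rw [hu]
        exact (hconn.dist_eq_zero_iff.mp h0).symm
      have wtag : ∀ t : Fin k ⊕ Fin k, w = Sum.inr (Sum.inr t) → u = w := by
        intro t hw
        have h0 : (myG k).dist u (Sum.inr (Sum.inr t)) = 0 := by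
          rw [hd t, hw, SimpleGraph.dist_self]
        rw [hw]
        exact hconn.dist_eq_zero_iff.mp h0
      rcases u with l | r | t
      · rcases w with l' | r' | t'
        · -- both left
          refine congrArg Sum.inl (Subtype.ext (funext fun i => ?_))
          have hiff : (l.1 i = false) ↔ (l'.1 i = false) :=
            (adj_left_tag k l i).symm.trans ((adjiff (Sum.inl i)).trans (adj_left_tag k l' i))
          cases h1 : l.1 i <;> cases h2 : l'.1 i <;> simp_all
        · -- left vs right
          obtain ⟨i, hi⟩ := myStr_exists_false k l
          exact absurd ((adjiff (Sum.inl i)).mp ((adj_left_tag k l i).mpr hi))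
            (not_adj_right_ltag k r' i)
        · exact wtag t' rfl
      · rcases w with l' | r' | t'
        · -- right vs left
          obtain ⟨j, hj⟩ := myStr_exists_false k r
          exact absurd ((adjiff (Sum.inr j)).mp ((adj_right_tag k r j).mpr hj))
            (not_adj_left_rtag k l' j)
        · -- both right
          refine congrArg (fun x => Sum.inr (Sum.inl x)) (Subtype.ext (funext fun j => ?_))
          have hiff : (r.1 j = false) ↔ (r'.1 j = false) :=
            (adj_right_tag k r j).symm.trans ((adjiff (Sum.inr j)).trans (adj_right_tag k r' j))
          cases h1 : r.1 j <;> cases h2 : r'.1 j <;> simp_all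
        · exact wtag t' rfl
      · exact utag t rfl
    calc metricDim (myG k) ≤ S.card := by
          rw [metricDim]
          exact Nat.sInf_le ⟨S, rfl, hres⟩
      _ = 2 * k := hcard
  · -- the complete bipartite subgraph
    have hstr : Fintype.card (MyStr k) = 2 ^ k - 1 := by
      have h1 : Fintype.card (MyStr k) =
          Fintype.card (Fin k → Bool) - Fintype.card {f : Fin k → Bool // f = fun _ => true} :=
        Fintype.card_subtype_compl _
      rw [h1, Fintype.card_subtype_eq]
      simp
    refine ⟨Finset.univ.image (Sum.inl : MyStr k → MyVtx k),
      Finset.univ.image (fun r : MyStr k => (Sum.inr (Sum.inl r) : MyVtx k)), ?_, ?_, ?_, ?_⟩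
    · rw [Finset.disjoint_left]
      rintro a ha hb
      simp only [Finset.mem_image, Finset.mem_univ, true_and] at ha hb
      obtain ⟨l, rfl⟩ := ha
      obtain ⟨r, hr⟩ := hb
      cases hr
    · rw [Finset.card_image_of_injective _ Sum.inl_injective, Finset.card_univ, hstr]
    · have hinj' : Function.Injective (fun r : MyStr k => (Sum.inr (Sum.inl r) : MyVtx k)) :=
        fun a b h => by simpa using h
      rw [Finset.card_image_of_injective _ hinj', Finset.card_univ, hstr]
    · rintro a ha b hb
      simp only [Finset.mem_image, Finset.mem_univ, true_and] at ha hb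
      obtain ⟨l, rfl⟩ := ha
      obtain ⟨r, rfl⟩ := hb
      exact ⟨by simp, Or.inl trivial⟩
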